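/- arXiv:1608.02269 — 2 statements merged into one kernel-verified Lean document; each statement's English description precedes it below -/
import Mathlib

section
/- The L-operator satisfies the RLL-type Yang–Baxter relation with the U_q(sl₂) R-matrix: for all u₁, u₂ (with u₂ ≠ 0), R_{ab}(u₁/u₂) L_{aj}(u₁) L_{bj}(u₂) = L_{bj}(u₂) L_{aj}(u₁) R_{ab}(u₁/u₂) as operators on W_a ⊗ W_b ⊗ V_j = ℂ²⊗ℂ²⊗ℂ², where R acts on the factors W_a⊗W_b, L_{aj} on W_a⊗V_j, and L_{bj} on W_b⊗V_j. -/
set_option maxHeartbeats 20000000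


open Finset

variable {K : Type*} [Field K]

/-- Matrix elements `⟨γ, δ| L(u) |α, β⟩` of the homogeneous `L`-operator:
`γ` auxiliary output, `δ` quantum output, `α` auxiliary input, `β` quantum input. -/
def LL (t a b c d e f u : K) (γ δ α β : Fin 2) : K :=
  if γ = 0 ∧ δ = 0 ∧ α = 0 ∧ β = 0 then a * u + b
  else if γ = 0 ∧ δ = 1 ∧ α = 0 ∧ β = 1 then a * t * u + b
  else if γ = 0 ∧ δ = 1 ∧ α = 1 ∧ β = 0 then (1 - t) * c * u
  else if γ = 1 ∧ δ = 0 ∧ α = 0 ∧ β = 1 then (1 - t) * d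
  else if γ = 1 ∧ δ = 0 ∧ α = 1 ∧ β = 0 then e * u + f
  else if γ = 1 ∧ δ = 1 ∧ α = 1 ∧ β = 1 then e * u + t * f
  else 0

/-- Matrix elements `⟨γ, δ| R(u) |α, β⟩` of the `U_q(sl₂)` `R`-matrix. -/
def Rm (t u : K) (γ δ α β : Fin 2) : K :=
  if γ = 0 ∧ δ = 0 ∧ α = 0 ∧ β = 0 then u - t
  else if γ = 0 ∧ δ = 1 ∧ α = 0 ∧ β = 1 then t * (u - 1)
  else if γ = 0 ∧ δ = 1 ∧ α = 1 ∧ β = 0 then (1 - t) * u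
  else if γ = 1 ∧ δ = 0 ∧ α = 0 ∧ β = 1 then 1 - t
  else if γ = 1 ∧ δ = 0 ∧ α = 1 ∧ β = 0 then u - 1
  else if γ = 1 ∧ δ = 1 ∧ α = 1 ∧ β = 1 then u - t
  else 0

/-- `R_{ab}(u)` acting on the factors `W_a ⊗ W_b` of `W_a ⊗ W_b ⊗ V_j`. -/
def R12 (t u : K) : Matrix (Fin 2 × Fin 2 × Fin 2) (Fin 2 × Fin 2 × Fin 2) K :=
  Matrix.of fun p q => Rm t u p.1 p.2.1 q.1 q.2.1 * (if p.2.2 = q.2.2 then 1 else 0)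

/-- `L_{aj}(u)` acting on the factors `W_a ⊗ V_j` of `W_a ⊗ W_b ⊗ V_j`. -/
def L13 (t a b c d e f u : K) :
    Matrix (Fin 2 × Fin 2 × Fin 2) (Fin 2 × Fin 2 × Fin 2) K :=
  Matrix.of fun p q => LL t a b c d e f u p.1 p.2.2 q.1 q.2.2 * (if p.2.1 = q.2.1 then 1 else 0)

/-- `L_{bj}(u)` acting on the factors `W_b ⊗ V_j` of `W_a ⊗ W_b ⊗ V_j`. -/
def L23 (t a b c d e f u : K) :
    Matrix (Fin 2 × Fin 2 × Fin 2) (Fin 2 × Fin 2 × Fin 2) K :=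
  Matrix.of fun p q => LL t a b c d e f u p.2.1 p.2.2 q.2.1 q.2.2 * (if p.1 = q.1 then 1 else 0)

theorem RLL_relation (t a b c d e f : K)
    (ht : t ≠ 1) (ha : a ≠ 0) (hb : b ≠ 0) (hc : c ≠ 0) (hd : d ≠ 0)
    (he : e ≠ 0) (hf : f ≠ 0)
    (hcon1 : c * d + a * f = 0) (hcon2 : t * (c * d) + b * e = 0)
    (u₁ u₂ : K) (hu₂ : u₂ ≠ 0) :
    R12 t (u₁ / u₂) * L13 t a b c d e f u₁ * L23 t a b c d e f u₂ =
      L23 t a b c d e f u₂ * L13 t a b c d e f u₁ * R12 t (u₁ / u₂) := by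
  have hf' : f = -(c * d) / a := by field_simp; linear_combination hcon1
  have he' : e = -(t * (c * d)) / b := by field_simp; linear_combination hcon2
  subst hf' he'
  ext ⟨i, j, k⟩ ⟨l, m, n⟩
  fin_cases i <;> fin_cases j <;> fin_cases k <;> fin_cases l <;> fin_cases m <;> fin_cases n <;>
    simp only [Matrix.mul_apply, R12, L13, L23, Rm, LL, Matrix.of_apply,
      Fintype.sum_prod_type, Fin.sum_univ_two] <;>
    norm_num <;> field_simp <;> ring
end

section
/- Matrix elements of the B-operator: for increasing sequences 1 ≤ x₁ < ⋯ < x_N ≤ M and 1 ≤ y₁ < ⋯ < y_{N+1} ≤ M, one has ⟨y₁⋯y_{N+1}| B(u) |x₁⋯x_N⟩ = G_{y,x}(u), where G_{y,x}(u) = 0 unless the interlacing condition y ≻ x holds (i.e. y₁ ≤ x₁ ≤ y₂ ≤ x₂ ≤ ⋯ ≤ x_N ≤ y_{N+1}), and if y ≻ x then, letting p₁ < ⋯ < p_{k+1} be the increasing sequence of those y_j (j=1,…,N+1) with y_j ∉ {x_{j−1}, x_j}, letting q₁ < ⋯ < q_k be the increasing sequence of those x_j (j=1,…,N) with x_j ∉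 {y_j, y_{j+1}}, and setting q₀ = 0, q_{k+1} = M+1, G_{y,x}(u) = ((1−t)cu)^{k+1} ((1−t)d)^{k} · ∏_{j=1}^{k+1} (atu+b)^{#{ℓ : p_j < x_ℓ < q_j}} (au+b)^{q_j − p_j − 1 − #{ℓ : p_j < x_ℓ < q_j}} (eu+tf)^{#{ℓ : q_{j−1} < x_ℓ < p_j}} (eu+f)^{p_j − q_{j−1} − 1 − #{ℓ : q_{j−1} < x_ℓ < p_j}}. -/
open Finset

variable {K : Type*} [Field K]

/-- The operator `B(u) = ⟨0|ₐ L_{aM}(u) ⋯ L_{a1}(u) |1⟩ₐ` on `M` sites,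
as a matrix in the standard basis of `(ℂ²)^{⊗M}` indexed by `Fin M → Fin 2`. -/
def Bop (M : ℕ) (t a b c d e f u : K) :
    Matrix (Fin M → Fin 2) (Fin M → Fin 2) K :=
  Matrix.of fun γ β =>
    ∑ α : Fin (M + 1) → Fin 2,
      if α 0 = 1 ∧ α (Fin.last M) = 0 then
        ∏ j : Fin M, LL t a b c d e f u (α j.succ) (γ j) (α j.castSucc) (β j)
      else 0

/-- The basis vector index of `(ℂ²)^{⊗M}` with particles (`1`s) exactly at the sites
in the range of `x`. -/
def cfg {M N : ℕ} (x : Fin N → Fin M) : Fin M → Fin 2 :=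
  fun i => if ∃ j, x j = i then 1 else 0

/-- The interlacing condition `y ≻ x`, i.e. `y₁ ≤ x₁ ≤ y₂ ≤ x₂ ≤ ⋯ ≤ x_N ≤ y_{N+1}`. -/
def interlace {M N : ℕ} (y : Fin (N + 1) → Fin M) (x : Fin N → Fin M) : Prop :=
  ∀ j : Fin N, y j.castSucc ≤ x j ∧ x j ≤ y j.succ

instance {M N : ℕ} (y : Fin (N + 1) → Fin M) (x : Fin N → Fin M) :
    Decidable (interlace y x) :=
  inferInstanceAs (Decidable (∀ j : Fin N, y j.castSucc ≤ x j ∧ x j ≤ y j.succ))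

/-- Indices `j` with `y_j ∉ {x_{j-1}, x_j}` (the `p`-sequence indices). -/
def Pset {M N : ℕ} (y : Fin (N + 1) → Fin M) (x : Fin N → Fin M) : Finset (Fin (N + 1)) :=
  univ.filter fun j =>
    ∀ ℓ : Fin N, ((ℓ : ℕ) = (j : ℕ) ∨ (ℓ : ℕ) + 1 = (j : ℕ)) → x ℓ ≠ y j

/-- Indices `ℓ` with `x_ℓ ∉ {y_ℓ, y_{ℓ+1}}` (the `q`-sequence indices). -/
def Qset {M N : ℕ} (y : Fin (N + 1) → Fin M) (x : Fin N → Fin M) : Finset (Fin N) :=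
  univ.filter fun ℓ =>
    ∀ m : Fin (N + 1), ((m : ℕ) = (ℓ : ℕ) ∨ (m : ℕ) = (ℓ : ℕ) + 1) → y m ≠ x ℓ

/-- The (1-based) site `p_{i+1}` of the increasing enumeration of the `p`-sequence. -/
def pseq {M N : ℕ} (y : Fin (N + 1) → Fin M) (x : Fin N → Fin M)
    (i : Fin (Pset y x).card) : ℕ :=
  ((y ((Pset y x).orderEmbOfFin rfl i)) : ℕ) + 1

/-- The (1-based) sites `q_i` of the `q`-sequence, extended by `q₀ = 0` and
`q_{k+1} = M + 1`. -/
def qseq {M N : ℕ} (y : Fin (N + 1) → Fin M) (x : Fin N → Fin M) (i : ℕ) : ℕ :=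
  if h0 : i = 0 then 0
  else if h : i ≤ (Qset y x).card then
    ((x ((Qset y x).orderEmbOfFin rfl ⟨i - 1, by omega⟩)) : ℕ) + 1
  else M + 1

/-- The number of particles `x_ℓ` strictly between the (1-based) sites `lo` and `hi`. -/
def cnt {M N : ℕ} (x : Fin N → Fin M) (lo hi : ℕ) : ℕ :=
  (univ.filter fun ℓ : Fin N => lo < (x ℓ : ℕ) + 1 ∧ (x ℓ : ℕ) + 1 < hi).card

/-- The skew polynomial `G_{y,x}(u)`. -/
def Gskew {M N : ℕ} (t a b c d e f u : K)
    (y : Fin (N + 1) → Fin M) (x : Fin N → Fin M) : K :=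
  if interlace y x then
    ((1 - t) * c * u) ^ (Pset y x).card * ((1 - t) * d) ^ (Qset y x).card *
      ∏ j : Fin (Pset y x).card,
        (a * t * u + b) ^ cnt x (pseq y x j) (qseq y x ((j : ℕ) + 1)) *
          (a * u + b) ^ (qseq y x ((j : ℕ) + 1) - pseq y x j - 1 -
            cnt x (pseq y x j) (qseq y x ((j : ℕ) + 1))) *
          (e * u + t * f) ^ cnt x (qseq y x (j : ℕ)) (pseq y x j) *
          (e * u + f) ^ (pseq y x j - qseq y x (j : ℕ) - 1 -
            cnt x (qseq y x (j : ℕ)) (pseq y x j))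
  else 0



/-! ### Auxiliary machinery -/

/-- count of values of a sequence below level `m` -/
def ctf {n M : ℕ} (x : Fin n → Fin M) (m : ℕ) : ℕ :=
  (univ.filter fun ℓ : Fin n => ((x ℓ : ℕ) < m)).card

lemma ctf_iff {n M : ℕ} {x : Fin n → Fin M} (hx : StrictMono x) (m : ℕ) (ℓ : Fin n) :
    (ℓ : ℕ) < ctf x m ↔ (x ℓ : ℕ) < m := by
  constructor
  · intro h
    by_contra hc
    push_neg at hc
    have hsub : (univ.filter fun ℓ' : Fin n => ((x ℓ' : ℕ) < m)) ⊆ Iio ℓ := by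
      intro ℓ' hℓ'
      simp only [mem_filter, mem_univ, true_and] at hℓ'
      have : (x ℓ' : ℕ) < (x ℓ : ℕ) := lt_of_lt_of_le hℓ' hc
      have : x ℓ' < x ℓ := Fin.lt_def.mpr this
      exact mem_Iio.mpr (hx.lt_iff_lt.mp this)
    have := Finset.card_le_card hsub
    rw [Fin.card_Iio] at this
    exact absurd h (by unfold ctf; omega)
  · intro h
    have hsub : Iic ℓ ⊆ (univ.filter fun ℓ' : Fin n => ((x ℓ' : ℕ) < m)) := by
      intro ℓ' hℓ'
      simp only [mem_Iic] at hℓ'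
      simp only [mem_filter, mem_univ, true_and]
      have : (x ℓ' : ℕ) ≤ (x ℓ : ℕ) := Fin.le_def.mp (hx.monotone hℓ')
      omega
    have := Finset.card_le_card hsub
    rw [Fin.card_Iic] at this
    unfold ctf
    omega

lemma ctf_le {n M : ℕ} (x : Fin n → Fin M) (m : ℕ) : ctf x m ≤ n := by
  simpa [ctf] using (Finset.card_filter_le univ (fun ℓ : Fin n => ((x ℓ : ℕ) < m)))

lemma ctf_zero {n M : ℕ} (x : Fin n → Fin M) : ctf x 0 = 0 := by
  simp [ctf]

lemma ctf_top {n M : ℕ} (x : Fin n → Fin M) (m : ℕ) (hm : M ≤ m) : ctf x m = n := by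
  have : (univ.filter fun ℓ : Fin n => ((x ℓ : ℕ) < m)) = (univ : Finset (Fin n)) := by
    apply Finset.filter_true_of_mem
    intro ℓ _
    exact lt_of_lt_of_le (x ℓ).isLt hm
  simp [ctf, this]

lemma ctf_step {n M : ℕ} {x : Fin n → Fin M} (hx : Function.Injective x) (m : ℕ) :
    ctf x (m + 1) = ctf x m + (if ∃ ℓ, (x ℓ : ℕ) = m then 1 else 0) := by
  classical
  unfold ctf
  have hsplit : (univ.filter fun ℓ : Fin n => ((x ℓ : ℕ) < m + 1))
      = (univ.filter fun ℓ : Fin n => ((x ℓ : ℕ) < m)) ∪ (univ.filter fun ℓ : Fin n => ((x ℓ : ℕ) = m)) := by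
    ext ℓ; simp only [mem_filter, mem_univ, true_and, mem_union]; omega
  have hdisj : Disjoint (univ.filter fun ℓ : Fin n => ((x ℓ : ℕ) < m)) (univ.filter fun ℓ : Fin n => ((x ℓ : ℕ) = m)) := by
    rw [Finset.disjoint_left]
    intro ℓ h1 h2
    simp only [mem_filter, mem_univ, true_and] at h1 h2
    omega
  rw [hsplit, Finset.card_union_of_disjoint hdisj]
  congr 1
  by_cases h : ∃ ℓ, (x ℓ : ℕ) = m
  · obtain ⟨ℓ0, hℓ0⟩ := h
    rw [if_pos ⟨ℓ0, hℓ0⟩]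
    have : (univ.filter fun ℓ : Fin n => ((x ℓ : ℕ) = m)) = {ℓ0} := by
      ext ℓ; simp only [mem_filter, mem_univ, true_and, mem_singleton]
      constructor
      · intro hv; exact hx (Fin.val_injective (by rw [hv, hℓ0]))
      · rintro rfl; exact hℓ0
    simp [this]
  · rw [if_neg h]
    have : (univ.filter fun ℓ : Fin n => ((x ℓ : ℕ) = m)) = ∅ := by
      apply Finset.filter_false_of_mem
      intro ℓ _ hv
      exact h ⟨ℓ, hv⟩
    simp [this]

section
variable {M N : ℕ} {x : Fin N → Fin M} {y : Fin (N + 1) → Fin M}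

lemma interlace_counts (hx : StrictMono x) (hy : StrictMono y) (hi : interlace y x) (m : ℕ) :
    ctf x m ≤ ctf y m ∧ ctf y m ≤ ctf x m + 1 := by
  constructor
  · rcases Nat.eq_zero_or_pos (ctf x m) with h0 | h0
    · omega
    · have hkN : ctf x m - 1 < N := by have := ctf_le x m; omega
      set ℓ : Fin N := ⟨ctf x m - 1, hkN⟩ with hℓ
      have hxℓ : (x ℓ : ℕ) < m := (ctf_iff hx m ℓ).mp (by simp [hℓ]; omega)
      have hyx : (y ℓ.castSucc : ℕ) ≤ (x ℓ : ℕ) := Fin.le_def.mp (hi ℓ).1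
      have : (ℓ.castSucc : ℕ) < ctf y m := (ctf_iff hy m ℓ.castSucc).mpr (by omega)
      simp [hℓ] at this
      omega
  · by_contra hc
    push_neg at hc
    have hkN : ctf x m + 1 ≤ N := by have := ctf_le y m; omega
    set my : Fin (N + 1) := ⟨ctf x m + 1, by omega⟩ with hmy
    have hym : (y my : ℕ) < m := (ctf_iff hy m my).mp (by simp [hmy]; omega)
    set ℓ : Fin N := ⟨ctf x m, by omega⟩ with hℓ
    have hsucc : ℓ.succ = my := by apply Fin.ext; simp [hℓ, hmy]
    have hxy : (x ℓ : ℕ) ≤ (y ℓ.succ : ℕ) := Fin.le_def.mp (hi ℓ).2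
    rw [hsucc] at hxy
    have : (ℓ : ℕ) < ctf x m := (ctf_iff hx m ℓ).mpr (by omega)
    simp [hℓ] at this

lemma counts_interlace (hx : StrictMono x) (hy : StrictMono y)
    (h : ∀ m, ctf x m ≤ ctf y m ∧ ctf y m ≤ ctf x m + 1) : interlace y x := by
  intro j
  constructor
  · by_contra hc
    push_neg at hc
    have hc' : (x j : ℕ) < (y j.castSucc : ℕ) := Fin.lt_def.mp hc
    set m := (x j : ℕ) + 1 with hm
    have h1 : (j : ℕ) < ctf x m := (ctf_iff hx m j).mpr (by omega)
    have h2 : ¬ ((j.castSucc : ℕ) < ctf y m) := fun hlt => by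
      have := (ctf_iff hy m j.castSucc).mp hlt; omega
    simp only [Fin.coe_castSucc] at h2
    have := (h m).1
    omega
  · by_contra hc
    push_neg at hc
    have hc' : (y j.succ : ℕ) < (x j : ℕ) := Fin.lt_def.mp hc
    set m := (y j.succ : ℕ) + 1 with hm
    have h1 : (j.succ : ℕ) < ctf y m := (ctf_iff hy m j.succ).mpr (by omega)
    have h2 : ¬ ((j : ℕ) < ctf x m) := fun hlt => by
      have := (ctf_iff hx m j).mp hlt; omega
    simp only [Fin.val_succ] at h1
    have := (h m).2
    omega
end

lemma LL_conserve {t a b c d e f u : K} {γ δ α β : Fin 2}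
    (h : LL t a b c d e f u γ δ α β ≠ 0) : (γ : ℕ) + (δ : ℕ) = (α : ℕ) + (β : ℕ) := by
  fin_cases γ <;> fin_cases δ <;> fin_cases α <;> fin_cases β <;> simp_all [LL]

/-- the level function: `1 + #x's below m - #y's below m` -/
def lev {M N : ℕ} (x : Fin N → Fin M) (y : Fin (N + 1) → Fin M) (m : ℕ) : ℕ :=
  1 + ctf x m - ctf y m

/-- the unique auxiliary path -/
def adf {M N : ℕ} (x : Fin N → Fin M) (y : Fin (N + 1) → Fin M) : Fin (M + 1) → Fin 2 :=
  fun j => if lev x y (j : ℕ) = 0 then 0 else 1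

section
variable {M N : ℕ} {x : Fin N → Fin M} {y : Fin (N + 1) → Fin M}

lemma cfg_val (x : Fin N → Fin M) (j : Fin M) :
    ((cfg x j : Fin 2) : ℕ) = if ∃ ℓ, ((x ℓ : ℕ)) = (j : ℕ) then 1 else 0 := by
  unfold cfg
  have : (∃ ℓ, x ℓ = j) ↔ ∃ ℓ, ((x ℓ : ℕ)) = (j : ℕ) := by
    constructor
    · rintro ⟨ℓ, h⟩; exact ⟨ℓ, by rw [h]⟩
    · rintro ⟨ℓ, h⟩; exact ⟨ℓ, Fin.ext h⟩
  split_ifs with h1 h2 h2 <;> first | rfl | (exact absurd (this.mp h1) h2) | (exact absurd (this.mpr h2) h1)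

lemma lev_add (hx : StrictMono x) (hy : StrictMono y) (hi : interlace y x) (m : ℕ) :
    lev x y m + ctf y m = 1 + ctf x m := by
  have := interlace_counts hx hy hi m
  unfold lev; omega

lemma lev_le_one (hx : StrictMono x) (hy : StrictMono y) (hi : interlace y x) (m : ℕ) :
    lev x y m ≤ 1 := by
  have := interlace_counts hx hy hi m
  unfold lev; omega

lemma adf_val (hx : StrictMono x) (hy : StrictMono y) (hi : interlace y x) (j : Fin (M + 1)) :
    ((adf x y j : Fin 2) : ℕ) = lev x y (j : ℕ) := by
  have := lev_le_one hx hy hi (j : ℕ)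
  unfold adf
  split_ifs with h
  · simp [h]
  · have : lev x y (j : ℕ) = 1 := by omega
    simp [this]

/-- paths with nonvanishing weight follow the counting profile -/
lemma path_profile (hx : StrictMono x) (hy : StrictMono y)
    {α : Fin (M + 1) → Fin 2} (h0 : α 0 = 1)
    (H : ∀ j : Fin M, ((α j.succ : ℕ)) + ((cfg y j : ℕ)) = ((α j.castSucc : ℕ)) + ((cfg x j : ℕ))) :
    ∀ m : Fin (M + 1), ((α m : ℕ)) + ctf y (m : ℕ) = 1 + ctf x (m : ℕ) := by
  intro m
  induction m using Fin.induction with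
  | zero => simp [h0, ctf_zero]
  | succ j ih =>
    have hstepx : ctf x ((j : ℕ) + 1) = ctf x (j : ℕ) + (if ∃ ℓ, ((x ℓ : ℕ)) = (j : ℕ) then 1 else 0) :=
      ctf_step hx.injective (j : ℕ)
    have hstepy : ctf y ((j : ℕ) + 1) = ctf y (j : ℕ) + (if ∃ ℓ, ((y ℓ : ℕ)) = (j : ℕ) then 1 else 0) :=
      ctf_step hy.injective (j : ℕ)
    have hH := H j
    rw [cfg_val, cfg_val] at hH
    simp only [Fin.val_succ, Fin.coe_castSucc] at *
    omega

lemma prod_factors_ne_zero {F : Fin M → K} (h : ∏ j : Fin M, F j ≠ 0) (j : Fin M) : F j ≠ 0 :=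
  fun hj => h (Finset.prod_eq_zero (mem_univ j) hj)

theorem Bop_eq_zero_of_not_interlace (hx : StrictMono x) (hy : StrictMono y)
    (hni : ¬ interlace y x) (t a b c d e f u : K) :
    Bop M t a b c d e f u (cfg y) (cfg x) = 0 := by
  show (∑ α : Fin (M + 1) → Fin 2, if α 0 = 1 ∧ α (Fin.last M) = 0 then
        ∏ j : Fin M, LL t a b c d e f u (α j.succ) (cfg y j) (α j.castSucc) (cfg x j)
      else 0) = 0
  apply Finset.sum_eq_zero
  intro α _
  split_ifs with hbd
  · by_contra hne
    have hfac := prod_factors_ne_zero hne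
    have H : ∀ j : Fin M, ((α j.succ : ℕ)) + ((cfg y j : ℕ)) = ((α j.castSucc : ℕ)) + ((cfg x j : ℕ)) :=
      fun j => LL_conserve (hfac j)
    have hprof := path_profile hx hy hbd.1 H
    apply hni
    apply counts_interlace hx hy
    intro m
    by_cases hm : m ≤ M
    · have := hprof ⟨m, by omega⟩
      have hlt : ((α ⟨m, by omega⟩ : Fin 2) : ℕ) < 2 := Fin.is_lt _
      simp only at this
      omega
    · rw [ctf_top x m (by omega), ctf_top y m (by omega)]
      omega
  · rfl

theorem Bop_eq_prod_of_interlace (hx : StrictMono x) (hy : StrictMono y)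
    (hi : interlace y x) (t a b c d e f u : K) :
    Bop M t a b c d e f u (cfg y) (cfg x) =
      ∏ j : Fin M, LL t a b c d e f u (adf x y j.succ) (cfg y j) (adf x y j.castSucc) (cfg x j) := by
  show (∑ α : Fin (M + 1) → Fin 2, if α 0 = 1 ∧ α (Fin.last M) = 0 then
        ∏ j : Fin M, LL t a b c d e f u (α j.succ) (cfg y j) (α j.castSucc) (cfg x j)
      else 0) = _
  have hb0 : adf x y 0 = 1 := by
    unfold adf lev
    have : ctf x (((0 : Fin (M+1))) : ℕ) = 0 := by simp [ctf_zero]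
    simp only [ctf_zero, Fin.val_zero]
    norm_num [ctf_zero]
  have hbl : adf x y (Fin.last M) = 0 := by
    unfold adf lev
    rw [if_pos]
    simp only [Fin.val_last]
    rw [ctf_top x M le_rfl, ctf_top y M le_rfl]
    omega
  rw [Finset.sum_eq_single (adf x y)]
  · rw [if_pos ⟨hb0, hbl⟩]
  · intro α _ hne
    split_ifs with hbd
    · by_contra hne0
      have hfac := prod_factors_ne_zero hne0
      have H : ∀ j : Fin M, ((α j.succ : ℕ)) + ((cfg y j : ℕ)) = ((α j.castSucc : ℕ)) + ((cfg x j : ℕ)) :=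
        fun j => LL_conserve (hfac j)
      have hprof := path_profile hx hy hbd.1 H
      apply hne
      funext m
      apply Fin.ext
      rw [adf_val hx hy hi]
      have h1 := hprof m
      have h2 := lev_add hx hy hi (m : ℕ)
      omega
    · rfl
  · intro h
    exact absurd (mem_univ _) h
end

section
variable {M N : ℕ} {x : Fin N → Fin M} {y : Fin (N + 1) → Fin M}

/-- adjacency: a common value of `x` and `y` must occur at adjacent indices -/
lemma adjacency (hx : StrictMono x) (hy : StrictMono y) (hi : interlace y x)
    {ℓ : Fin N} {m : Fin (N + 1)} (h : x ℓ = y m) :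
    (m : ℕ) = (ℓ : ℕ) ∨ (m : ℕ) = (ℓ : ℕ) + 1 := by
  by_contra hc
  push_neg at hc
  rcases Nat.lt_or_ge (m : ℕ) (ℓ : ℕ) with hlt | hge
  · -- m < ℓ : y m ≤ x m < x ℓ
    have hmN : (m : ℕ) < N := lt_of_lt_of_le hlt (by omega)
    set jm : Fin N := ⟨(m : ℕ), hmN⟩ with hjm
    have h1 : y jm.castSucc ≤ x jm := (hi jm).1
    have hcast : jm.castSucc = m := by apply Fin.ext; simp [hjm]
    have h2 : x jm < x ℓ := hx (by rw [Fin.lt_def]; simp [hjm]; omega)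
    rw [hcast] at h1
    have := lt_of_le_of_lt h1 h2
    rw [h] at this
    exact absurd this (lt_irrefl _)
  · -- m ≥ ℓ, m ≠ ℓ, m ≠ ℓ+1 so m ≥ ℓ+2
    have hge2 : (ℓ : ℕ) + 2 ≤ (m : ℕ) := by omega
    have h1 : x ℓ ≤ y ℓ.succ := (hi ℓ).2
    have h2 : y ℓ.succ < y m := hy (by rw [Fin.lt_def]; simp; omega)
    have := lt_of_le_of_lt h1 h2
    rw [h] at this
    exact absurd this (lt_irrefl _)

lemma Pset_mem (hx : StrictMono x) (hy : StrictMono y) (hi : interlace y x)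
    (m : Fin (N + 1)) : m ∈ Pset y x ↔ ∀ ℓ : Fin N, x ℓ ≠ y m := by
  unfold Pset
  simp only [mem_filter, mem_univ, true_and]
  constructor
  · intro h ℓ hne
    exact h ℓ (by rcases adjacency hx hy hi hne with h' | h' <;> omega) hne
  · intro h ℓ _
    exact h ℓ

lemma Qset_mem (hx : StrictMono x) (hy : StrictMono y) (hi : interlace y x)
    (ℓ : Fin N) : ℓ ∈ Qset y x ↔ ∀ m : Fin (N + 1), y m ≠ x ℓ := by
  unfold Qset
  simp only [mem_filter, mem_univ, true_and]
  constructor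
  · intro h m hne
    exact h m (by rcases adjacency hx hy hi hne.symm with h' | h' <;> omega) hne
  · intro h m _
    exact h m

/-- the increasing enumeration of `p`-site values -/
def yP (y : Fin (N + 1) → Fin M) (x : Fin N → Fin M) : Fin (Pset y x).card → Fin M :=
  fun i => y ((Pset y x).orderEmbOfFin rfl i)

def xQ (y : Fin (N + 1) → Fin M) (x : Fin N → Fin M) : Fin (Qset y x).card → Fin M :=
  fun i => x ((Qset y x).orderEmbOfFin rfl i)

lemma yP_strictMono (hy : StrictMono y) : StrictMono (yP y x) :=
  fun _ _ h => hy (((Pset y x).orderEmbOfFin rfl).strictMono h)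

lemma xQ_strictMono (hx : StrictMono x) : StrictMono (xQ y x) :=
  fun _ _ h => hx (((Qset y x).orderEmbOfFin rfl).strictMono h)

lemma Pc_eq (m : ℕ) :
    ctf (yP y x) m = ((Pset y x).filter (fun my => ((y my : ℕ) < m))).card := by
  unfold ctf
  apply Finset.card_bij (fun i _ => (Pset y x).orderEmbOfFin rfl i)
  · intro i hi
    simp only [mem_filter, mem_univ, true_and] at hi ⊢
    exact ⟨(Pset y x).orderEmbOfFin_mem rfl i, hi⟩
  · intro i1 _ i2 _ h
    exact ((Pset y x).orderEmbOfFin rfl).injective h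
  · intro my hmy
    simp only [mem_filter, mem_univ, true_and] at hmy
    have : my ∈ Set.range ((Pset y x).orderEmbOfFin rfl) := by
      rw [Finset.range_orderEmbOfFin]
      exact hmy.1
    obtain ⟨i, hi⟩ := this
    refine ⟨i, ?_, hi⟩
    simp only [mem_filter, mem_univ, true_and, yP, hi]
    exact mem_filter.mpr ⟨mem_univ _, by simp only [hi]; exact hmy.2⟩

lemma Qc_eq (m : ℕ) :
    ctf (xQ y x) m = ((Qset y x).filter (fun ℓ => ((x ℓ : ℕ) < m))).card := by
  unfold ctf
  apply Finset.card_bij (fun i _ => (Qset y x).orderEmbOfFin rfl i)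
  · intro i hi
    simp only [mem_filter, mem_univ, true_and] at hi ⊢
    exact ⟨(Qset y x).orderEmbOfFin_mem rfl i, hi⟩
  · intro i1 _ i2 _ h
    exact ((Qset y x).orderEmbOfFin rfl).injective h
  · intro ℓ hℓ
    simp only [mem_filter, mem_univ, true_and] at hℓ
    have : ℓ ∈ Set.range ((Qset y x).orderEmbOfFin rfl) := by
      rw [Finset.range_orderEmbOfFin]
      exact hℓ.1
    obtain ⟨i, hi⟩ := this
    refine ⟨i, ?_, hi⟩
    simp only [mem_filter, mem_univ, true_and, xQ, hi]
    exact mem_filter.mpr ⟨mem_univ _, by simp only [hi]; exact hℓ.2⟩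

/-- the bridge: `cy m + Qc m = cx m + Pc m` -/
lemma count_bridge (hx : StrictMono x) (hy : StrictMono y) (hi : interlace y x) (m : ℕ) :
    ctf y m + ctf (xQ y x) m = ctf x m + ctf (yP y x) m := by
  classical
  rw [Pc_eq, Qc_eq]
  have hysplit : ctf y m = ((Pset y x).filter (fun my => ((y my : ℕ) < m))).card
      + (((Pset y x)ᶜ).filter (fun my => ((y my : ℕ) < m))).card := by
    unfold ctf
    rw [← Finset.card_union_of_disjoint]
    · congr 1
      ext my
      simp only [mem_filter, mem_union, mem_compl, mem_univ, true_and]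
      by_cases h : my ∈ Pset y x <;> simp [h] <;> tauto
    · exact Finset.disjoint_filter_filter disjoint_compl_right
  have hxsplit : ctf x m = ((Qset y x).filter (fun ℓ => ((x ℓ : ℕ) < m))).card
      + (((Qset y x)ᶜ).filter (fun ℓ => ((x ℓ : ℕ) < m))).card := by
    unfold ctf
    rw [← Finset.card_union_of_disjoint]
    · congr 1
      ext ℓ
      simp only [mem_filter, mem_union, mem_compl, mem_univ, true_and]
      by_cases h : ℓ ∈ Qset y x <;> simp [h] <;> tauto
    · exact Finset.disjoint_filter_filter disjoint_compl_right
  have hbij : (((Pset y x)ᶜ).filter (fun my => ((y my : ℕ) < m))).card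
      = (((Qset y x)ᶜ).filter (fun ℓ => ((x ℓ : ℕ) < m))).card := by
    have hex : ∀ my : Fin (N + 1), my ∉ Pset y x → ∃ ℓ, x ℓ = y my := by
      intro my hmy
      by_contra hcon
      push_neg at hcon
      exact hmy ((Pset_mem hx hy hi my).mpr hcon)
    apply Finset.card_bij (fun my (hmy : my ∈ ((Pset y x)ᶜ).filter (fun my => ((y my : ℕ) < m)))
      => Classical.choose (hex my (by simp only [mem_filter, mem_compl] at hmy; exact hmy.1)))
    · intro my hmy
      have hmem := hmy
      simp only [mem_filter, mem_compl] at hmem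
      have hspec := Classical.choose_spec (hex my (by simp only [mem_filter, mem_compl] at hmy; exact hmy.1))
      simp only [mem_filter, mem_compl]
      constructor
      · intro hQ
        rw [Qset_mem hx hy hi] at hQ
        exact hQ my hspec.symm
      · rw [hspec]; exact hmem.2
    · intro my1 hmy1 my2 hmy2 heq
      have h1 := Classical.choose_spec (hex my1 (by simp only [mem_filter, mem_compl] at hmy1; exact hmy1.1))
      have h2 := Classical.choose_spec (hex my2 (by simp only [mem_filter, mem_compl] at hmy2; exact hmy2.1))
      apply hy.injective
      rw [← h1, ← h2, heq]
    · intro ℓ hℓ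
      simp only [mem_filter, mem_compl] at hℓ
      have hexm : ∃ my, y my = x ℓ := by
        by_contra hcon
        push_neg at hcon
        exact hℓ.1 ((Qset_mem hx hy hi ℓ).mpr hcon)
      obtain ⟨my, hmy⟩ := hexm
      have hmyP : my ∉ Pset y x := by
        rw [Pset_mem hx hy hi]
        push_neg
        exact ⟨ℓ, hmy.symm⟩
      have hmymem : my ∈ ((Pset y x)ᶜ).filter (fun my => ((y my : ℕ) < m)) := by
        simp only [mem_filter, mem_compl]
        exact ⟨hmyP, by rw [hmy]; exact hℓ.2⟩
      refine ⟨my, hmymem, ?_⟩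
      have hspec := Classical.choose_spec (hex my hmyP)
      apply hx.injective
      rw [hspec, hmy]
  omega

lemma lev_PQ (hx : StrictMono x) (hy : StrictMono y) (hi : interlace y x) (m : ℕ) :
    lev x y m + ctf (yP y x) m = 1 + ctf (xQ y x) m := by
  have h1 := lev_add hx hy hi m
  have h2 := count_bridge hx hy hi m
  omega

lemma card_PQ (hx : StrictMono x) (hy : StrictMono y) (hi : interlace y x) :
    (Pset y x).card = (Qset y x).card + 1 := by
  have h1 := lev_PQ hx hy hi M
  rw [ctf_top (yP y x) M le_rfl, ctf_top (xQ y x) M le_rfl] at h1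
  have h2 := lev_add hx hy hi M
  rw [ctf_top x M le_rfl, ctf_top y M le_rfl] at h2
  omega
end

section
variable {M N : ℕ} {x : Fin N → Fin M} {y : Fin (N + 1) → Fin M}

lemma pseq_eq (i : Fin (Pset y x).card) : pseq y x i = (yP y x i : ℕ) + 1 := rfl

lemma pseq_pos (i : Fin (Pset y x).card) : 1 ≤ pseq y x i := by rw [pseq_eq]; omega

lemma pseq_le (i : Fin (Pset y x).card) : pseq y x i ≤ M := by
  rw [pseq_eq]; have := (yP y x i).isLt; omega

lemma qseq_zero : qseq y x 0 = 0 := by simp [qseq]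

lemma qseq_succ (i : ℕ) (h : i < (Qset y x).card) :
    qseq y x (i + 1) = (xQ y x ⟨i, h⟩ : ℕ) + 1 := by
  unfold qseq xQ
  rw [dif_neg (by omega), dif_pos (by omega)]
  simp only [Nat.add_sub_cancel]

lemma qseq_succF (tt : Fin (Qset y x).card) :
    qseq y x ((tt : ℕ) + 1) = (x ((Qset y x).orderEmbOfFin rfl tt) : ℕ) + 1 := by
  rw [qseq_succ _ tt.isLt]
  rfl

lemma qseq_top (i : ℕ) (h : (Qset y x).card < i) : qseq y x i = M + 1 := by
  unfold qseq
  rw [dif_neg (by omega), dif_neg (by omega)]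

lemma qseq_le_M1 (i : ℕ) : qseq y x i ≤ M + 1 := by
  unfold qseq
  split_ifs with h0 h
  · omega
  · have := (x ((Qset y x).orderEmbOfFin rfl ⟨i - 1, by omega⟩)).isLt; omega
  · omega

lemma pseq_le_iff (hy : StrictMono y) (i : Fin (Pset y x).card) (m : ℕ) :
    pseq y x i ≤ m ↔ (i : ℕ) < ctf (yP y x) m := by
  rw [pseq_eq, ctf_iff (yP_strictMono hy) m i]
  omega

lemma qseq_le_iff (hx : StrictMono x) (i : ℕ) (h : i < (Qset y x).card) (m : ℕ) :
    qseq y x (i + 1) ≤ m ↔ i < ctf (xQ y x) m := by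
  rw [qseq_succ i h]
  have := ctf_iff (xQ_strictMono hx (y := y)) m ⟨i, h⟩
  simp only at this
  omega

lemma pq_ne (hx : StrictMono x) (hy : StrictMono y) (hi : interlace y x)
    (i : Fin (Pset y x).card) (j : ℕ) (hj : j < (Qset y x).card) :
    pseq y x i ≠ qseq y x (j + 1) := by
  rw [pseq_eq, qseq_succ j hj]
  intro hcon
  have hval : yP y x i = xQ y x ⟨j, hj⟩ := Fin.ext (by omega)
  have hP := (Pset_mem hx hy hi ((Pset y x).orderEmbOfFin rfl i)).mp
    ((Pset y x).orderEmbOfFin_mem rfl i)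
  exact hP ((Qset y x).orderEmbOfFin rfl ⟨j, hj⟩) hval.symm

lemma qseq_mono (hx : StrictMono x) {i1 i2 : ℕ} (h : i1 ≤ i2) :
    qseq y x i1 ≤ qseq y x i2 := by
  rcases Nat.eq_zero_or_pos i1 with h0 | h0
  · rw [h0, qseq_zero]; omega
  · by_cases h2 : i2 ≤ (Qset y x).card
    · obtain ⟨j1, rfl⟩ : ∃ j1, i1 = j1 + 1 := ⟨i1 - 1, by omega⟩
      obtain ⟨j2, rfl⟩ : ∃ j2, i2 = j2 + 1 := ⟨i2 - 1, by omega⟩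
      rw [qseq_succ j1 (by omega), qseq_succ j2 (by omega)]
      have : xQ y x ⟨j1, by omega⟩ ≤ xQ y x ⟨j2, by omega⟩ :=
        (xQ_strictMono hx (y := y)).monotone (by simp [Fin.le_def]; omega)
      have := Fin.le_def.mp this
      omega
    · rw [qseq_top i2 (by omega)]
      exact qseq_le_M1 i1

lemma alt1 (hx : StrictMono x) (hy : StrictMono y) (hi : interlace y x)
    (i : Fin (Pset y x).card) : qseq y x (i : ℕ) < pseq y x i := by
  rcases Nat.eq_zero_or_pos (i : ℕ) with h0 | h0
  · rw [h0, qseq_zero]; exact pseq_pos i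
  · obtain ⟨j, hj⟩ : ∃ j, (i : ℕ) = j + 1 := ⟨(i : ℕ) - 1, by omega⟩
    have hjQ : j < (Qset y x).card := by
      have := i.isLt; have := card_PQ hx hy hi; omega
    by_contra hc
    push_neg at hc
    have hne := pq_ne hx hy hi i j hjQ
    rw [← hj] at hne
    have hlt : pseq y x i < qseq y x (i : ℕ) := by omega
    set m := qseq y x (i : ℕ) - 1 with hm
    have hq1 : 1 ≤ qseq y x (i : ℕ) := by
      rw [hj, qseq_succ j hjQ]; omega
    have hPc : (i : ℕ) < ctf (yP y x) m := by
      rw [← pseq_le_iff hy]; omega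
    have hQc : ctf (xQ y x) m ≤ j := by
      by_contra hq
      push_neg at hq
      have := (qseq_le_iff hx j hjQ m).mpr hq
      rw [← hj] at this
      omega
    have := lev_PQ hx hy hi m
    omega

lemma alt2 (hx : StrictMono x) (hy : StrictMono y) (hi : interlace y x)
    (i : Fin (Pset y x).card) : pseq y x i < qseq y x ((i : ℕ) + 1) := by
  by_cases hq : (i : ℕ) < (Qset y x).card
  · by_contra hc
    push_neg at hc
    have hne := pq_ne hx hy hi i (i : ℕ) hq
    have hlt : qseq y x ((i : ℕ) + 1) < pseq y x i := by omega
    set m := pseq y x i - 1 with hm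
    have hp1 := pseq_pos i
    have hQc : (i : ℕ) < ctf (xQ y x) m := by
      rw [← qseq_le_iff hx (i : ℕ) hq]; omega
    have hPc : ¬ ((i : ℕ) < ctf (yP y x) m) := by
      rw [← pseq_le_iff hy]; omega
    have h1 := lev_PQ hx hy hi m
    have h2 := lev_le_one hx hy hi m
    omega
  · rw [qseq_top ((i : ℕ) + 1) (by omega)]
    have := pseq_le i
    omega

lemma lev_interval_one (hx : StrictMono x) (hy : StrictMono y) (hi : interlace y x)
    (i : Fin (Pset y x).card) (m : ℕ) (h1 : qseq y x (i : ℕ) ≤ m) (h2 : m < pseq y x i) :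
    lev x y m = 1 := by
  have hPc : ctf (yP y x) m ≤ (i : ℕ) := by
    by_contra hp
    push_neg at hp
    have := (pseq_le_iff hy i m).mpr hp
    omega
  have hQc : (i : ℕ) ≤ ctf (xQ y x) m := by
    rcases Nat.eq_zero_or_pos (i : ℕ) with h0 | h0
    · omega
    · obtain ⟨j, hj⟩ : ∃ j, (i : ℕ) = j + 1 := ⟨(i : ℕ) - 1, by omega⟩
      have hjQ : j < (Qset y x).card := by
        have := i.isLt; have := card_PQ hx hy hi; omega
      rw [hj] at h1
      have := (qseq_le_iff hx j hjQ m).mp h1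
      omega
  have h3 := lev_PQ hx hy hi m
  have h4 := lev_le_one hx hy hi m
  omega

lemma lev_interval_zero (hx : StrictMono x) (hy : StrictMono y) (hi : interlace y x)
    (i : Fin (Pset y x).card) (m : ℕ) (h1 : pseq y x i ≤ m) (h2 : m < qseq y x ((i : ℕ) + 1)) :
    lev x y m = 0 := by
  have hPc : (i : ℕ) < ctf (yP y x) m := (pseq_le_iff hy i m).mp h1
  have hQc : ctf (xQ y x) m ≤ (i : ℕ) := by
    by_cases hq : (i : ℕ) < (Qset y x).card
    · by_contra hqq
      push_neg at hqq
      have := (qseq_le_iff hx (i : ℕ) hq m).mpr hqq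
      omega
    · have h := ctf_le (xQ y x) m
      omega
  have h3 := lev_PQ hx hy hi m
  omega

lemma exists_interval_zero (hx : StrictMono x) (hy : StrictMono y) (hi : interlace y x)
    (j : Fin M) (hlev : lev x y (j : ℕ) = 0)
    (hnq : ∀ ℓ : Fin N, x ℓ = j → ∃ m', y m' = j) :
    ∃ i : Fin (Pset y x).card,
      pseq y x i < (j : ℕ) + 1 ∧ (j : ℕ) + 1 < qseq y x ((i : ℕ) + 1) := by
  have hcPQ := card_PQ hx hy hi
  have hQle := ctf_le (xQ y x) (j : ℕ)
  have h1 := lev_PQ hx hy hi (j : ℕ)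
  have hidx : ctf (xQ y x) (j : ℕ) < (Pset y x).card := by omega
  obtain ⟨ip, hipval⟩ : ∃ ip : Fin (Pset y x).card, (ip : ℕ) = ctf (xQ y x) (j : ℕ) :=
    ⟨⟨_, hidx⟩, rfl⟩
  refine ⟨ip, ?_, ?_⟩
  · have hle : pseq y x ip ≤ (j : ℕ) := by
      rw [pseq_le_iff hy, hipval]
      omega
    omega
  · rw [hipval]
    by_cases hq : ctf (xQ y x) (j : ℕ) < (Qset y x).card
    · have hge : ¬ (qseq y x (ctf (xQ y x) (j : ℕ) + 1) ≤ (j : ℕ)) := by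
        rw [qseq_le_iff hx _ hq]
        omega
      rcases Nat.lt_or_ge ((j : ℕ) + 1) (qseq y x (ctf (xQ y x) (j : ℕ) + 1)) with h | h
      · exact h
      · exfalso
        have heq : qseq y x (ctf (xQ y x) (j : ℕ) + 1) = (j : ℕ) + 1 := by omega
        rw [qseq_succ _ hq] at heq
        have hxval : x ((Qset y x).orderEmbOfFin rfl ⟨ctf (xQ y x) (j : ℕ), hq⟩) = j := by
          apply Fin.ext
          have h2 : (xQ y x ⟨ctf (xQ y x) (j : ℕ), hq⟩ : ℕ) = (j : ℕ) := by omega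
          exact h2
        obtain ⟨m', hm'⟩ := hnq _ hxval
        have hQ := (Qset_mem hx hy hi _).mp
          ((Qset y x).orderEmbOfFin_mem rfl ⟨ctf (xQ y x) (j : ℕ), hq⟩)
        exact hQ m' (by rw [hm', hxval])
    · rw [qseq_top _ (by omega)]
      have := j.isLt
      omega

lemma exists_interval_one (hx : StrictMono x) (hy : StrictMono y) (hi : interlace y x)
    (j : Fin M) (hlev : lev x y (j : ℕ) = 1)
    (hnp : ∀ m' : Fin (N + 1), y m' = j → ∃ ℓ, x ℓ = j) :
    ∃ i : Fin (Pset y x).card,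
      qseq y x (i : ℕ) < (j : ℕ) + 1 ∧ (j : ℕ) + 1 < pseq y x i := by
  have hcPQ := card_PQ hx hy hi
  have h1 := lev_PQ hx hy hi (j : ℕ)
  have hQle := ctf_le (xQ y x) (j : ℕ)
  have hidx : ctf (yP y x) (j : ℕ) < (Pset y x).card := by omega
  obtain ⟨ip, hipval⟩ : ∃ ip : Fin (Pset y x).card, (ip : ℕ) = ctf (yP y x) (j : ℕ) :=
    ⟨⟨_, hidx⟩, rfl⟩
  refine ⟨ip, ?_, ?_⟩
  · rw [hipval]
    rcases Nat.eq_zero_or_pos (ctf (yP y x) (j : ℕ)) with h0 | h0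
    · rw [h0, qseq_zero]; omega
    · obtain ⟨tt, htt⟩ : ∃ tt, ctf (yP y x) (j : ℕ) = tt + 1 :=
        ⟨ctf (yP y x) (j : ℕ) - 1, by omega⟩
      rw [htt]
      have httQ : tt < (Qset y x).card := by omega
      have : qseq y x (tt + 1) ≤ (j : ℕ) := by
        rw [qseq_le_iff hx _ httQ]; omega
      omega
  · have hge : ¬ (pseq y x ip ≤ (j : ℕ)) := by
      rw [pseq_le_iff hy, hipval]
      omega
    rcases Nat.lt_or_ge ((j : ℕ) + 1) (pseq y x ip) with h | h
    · exact h
    · exfalso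
      have heq : pseq y x ip = (j : ℕ) + 1 := by omega
      rw [pseq_eq] at heq
      have hyval : y ((Pset y x).orderEmbOfFin rfl ip) = j := by
        apply Fin.ext
        have h2 : (yP y x ip : ℕ) = (j : ℕ) := by omega
        exact h2
      obtain ⟨ℓ, hℓ⟩ := hnp _ hyval
      have hP := (Pset_mem hx hy hi _).mp ((Pset y x).orderEmbOfFin_mem rfl ip)
      exact hP ℓ (by rw [hℓ, hyval])

lemma uniq_zero (hx : StrictMono x) (hy : StrictMono y) (hi : interlace y x)
    {i i' : Fin (Pset y x).card} {s : ℕ}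
    (h : pseq y x i < s ∧ s < qseq y x ((i : ℕ) + 1))
    (h' : pseq y x i' < s ∧ s < qseq y x ((i' : ℕ) + 1)) : i = i' := by
  rcases lt_trichotomy i i' with hlt | heq | hlt
  · exfalso
    have hm : qseq y x ((i : ℕ) + 1) ≤ qseq y x (i' : ℕ) := qseq_mono hx (by exact Fin.lt_def.mp hlt)
    have := alt1 hx hy hi i'
    omega
  · exact heq
  · exfalso
    have hm : qseq y x ((i' : ℕ) + 1) ≤ qseq y x (i : ℕ) := qseq_mono hx (by exact Fin.lt_def.mp hlt)
    have := alt1 hx hy hi i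
    omega

lemma uniq_one (hx : StrictMono x) (hy : StrictMono y) (hi : interlace y x)
    {i i' : Fin (Pset y x).card} {s : ℕ}
    (h : qseq y x (i : ℕ) < s ∧ s < pseq y x i)
    (h' : qseq y x (i' : ℕ) < s ∧ s < pseq y x i') : i = i' := by
  rcases lt_trichotomy i i' with hlt | heq | hlt
  · exfalso
    have hm : qseq y x ((i : ℕ) + 1) ≤ qseq y x (i' : ℕ) := qseq_mono hx (by exact Fin.lt_def.mp hlt)
    have := alt2 hx hy hi i
    omega
  · exact heq
  · exfalso
    have hm : qseq y x ((i' : ℕ) + 1) ≤ qseq y x (i : ℕ) := qseq_mono hx (by exact Fin.lt_def.mp hlt)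
    have := alt2 hx hy hi i'
    omega

lemma class_zero (hx : StrictMono x) (hy : StrictMono y) (hi : interlace y x)
    (i : Fin (Pset y x).card) (j : Fin M)
    (h1 : pseq y x i < (j : ℕ) + 1) (h2 : (j : ℕ) + 1 < qseq y x ((i : ℕ) + 1)) :
    (∃ ℓ, x ℓ = j) ↔ (∃ m', y m' = j) := by
  constructor
  · rintro ⟨ℓ, hℓ⟩
    by_contra hny
    push_neg at hny
    have hQ : ℓ ∈ Qset y x := (Qset_mem hx hy hi ℓ).mpr (by
      intro m' hm'
      exact hny m' (by rw [hm', hℓ]))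
    have : ℓ ∈ Set.range ((Qset y x).orderEmbOfFin rfl) := by
      rw [Finset.range_orderEmbOfFin]; exact hQ
    obtain ⟨tt, htt⟩ := this
    have hqt : qseq y x ((tt : ℕ) + 1) = (j : ℕ) + 1 := by
      rw [qseq_succF tt, htt, hℓ]
    rcases Nat.lt_or_ge (tt : ℕ) (i : ℕ) with hti | hti
    · have hm : qseq y x ((tt : ℕ) + 1) ≤ qseq y x (i : ℕ) := qseq_mono hx (by omega)
      have := alt1 hx hy hi i
      omega
    · have hm : qseq y x ((i : ℕ) + 1) ≤ qseq y x ((tt : ℕ) + 1) := qseq_mono hx (by omega)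
      omega
  · rintro ⟨m', hm'⟩
    by_contra hnx
    push_neg at hnx
    have hP : m' ∈ Pset y x := (Pset_mem hx hy hi m').mpr (by
      intro ℓ hℓ
      exact hnx ℓ (by rw [hℓ, hm']))
    have : m' ∈ Set.range ((Pset y x).orderEmbOfFin rfl) := by
      rw [Finset.range_orderEmbOfFin]; exact hP
    obtain ⟨s, hs⟩ := this
    have hps : pseq y x s = (j : ℕ) + 1 := by
      rw [pseq_eq]
      unfold yP
      rw [hs, hm']
    rcases le_or_gt s i with hsi | hsi
    · have : pseq y x s ≤ pseq y x i := by
        rcases eq_or_lt_of_le hsi with h | h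
        · rw [h]
        · exact le_of_lt (by
            have := (yP_strictMono hy (x := x)) h
            rw [pseq_eq, pseq_eq]
            have := Fin.lt_def.mp this
            omega)
      omega
    · have hqs : qseq y x (s : ℕ) ≥ qseq y x ((i : ℕ) + 1) := qseq_mono hx (by exact Fin.lt_def.mp hsi)
      have := alt1 hx hy hi s
      omega

lemma class_one (hx : StrictMono x) (hy : StrictMono y) (hi : interlace y x)
    (i : Fin (Pset y x).card) (j : Fin M)
    (h1 : qseq y x (i : ℕ) < (j : ℕ) + 1) (h2 : (j : ℕ) + 1 < pseq y x i) :
    (∃ ℓ, x ℓ = j) ↔ (∃ m', y m' = j) := by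
  constructor
  · rintro ⟨ℓ, hℓ⟩
    by_contra hny
    push_neg at hny
    have hQ : ℓ ∈ Qset y x := (Qset_mem hx hy hi ℓ).mpr (by
      intro m' hm'
      exact hny m' (by rw [hm', hℓ]))
    have : ℓ ∈ Set.range ((Qset y x).orderEmbOfFin rfl) := by
      rw [Finset.range_orderEmbOfFin]; exact hQ
    obtain ⟨tt, htt⟩ := this
    have hqt : qseq y x ((tt : ℕ) + 1) = (j : ℕ) + 1 := by
      rw [qseq_succF tt, htt, hℓ]
    rcases Nat.lt_or_ge (tt : ℕ) (i : ℕ) with hti | hti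
    · have hm : qseq y x ((tt : ℕ) + 1) ≤ qseq y x (i : ℕ) := qseq_mono hx (by omega)
      omega
    · have hm : qseq y x ((i : ℕ) + 1) ≤ qseq y x ((tt : ℕ) + 1) := qseq_mono hx (by omega)
      have := alt2 hx hy hi i
      omega
  · rintro ⟨m', hm'⟩
    by_contra hnx
    push_neg at hnx
    have hP : m' ∈ Pset y x := (Pset_mem hx hy hi m').mpr (by
      intro ℓ hℓ
      exact hnx ℓ (by rw [hℓ, hm']))
    have : m' ∈ Set.range ((Pset y x).orderEmbOfFin rfl) := by
      rw [Finset.range_orderEmbOfFin]; exact hP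
    obtain ⟨s, hs⟩ := this
    have hps : pseq y x s = (j : ℕ) + 1 := by
      rw [pseq_eq]
      unfold yP
      rw [hs, hm']
    have hsi : s < i := by
      by_contra hge
      push_neg at hge
      have : pseq y x i ≤ pseq y x s := by
        rcases eq_or_lt_of_le hge with h | h
        · rw [h]
        · have := (yP_strictMono hy (x := x)) h
          rw [pseq_eq, pseq_eq]
          have := Fin.lt_def.mp this
          omega
      omega
    have hqs : qseq y x ((s : ℕ) + 1) ≤ qseq y x (i : ℕ) := qseq_mono hx (by exact Fin.lt_def.mp hsi)
    have := alt2 hx hy hi s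
    omega
end


section
variable {M N : ℕ} {x : Fin N → Fin M} {y : Fin (N + 1) → Fin M}

lemma site_weight (hx : StrictMono x) (hy : StrictMono y) (hi : interlace y x)
    (t a b c d e f u : K) (j : Fin M) :
    LL t a b c d e f u (adf x y j.succ) (cfg y j) (adf x y j.castSucc) (cfg x j) =
      if (∃ m', y m' = j) ∧ ¬ (∃ ℓ, x ℓ = j) then (1 - t) * c * u
      else if (∃ ℓ, x ℓ = j) ∧ ¬ (∃ m', y m' = j) then (1 - t) * d
      else if lev x y (j : ℕ) = 0 then
        (if ∃ ℓ, x ℓ = j then a * t * u + b else a * u + b)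
      else (if ∃ ℓ, x ℓ = j then e * u + t * f else e * u + f) := by
  classical
  have hstepx := ctf_step hx.injective (j : ℕ)
  have hstepy := ctf_step hy.injective (j : ℕ)
  have h1 := lev_add hx hy hi (j : ℕ)
  have h2 := lev_add hx hy hi ((j : ℕ) + 1)
  have hb1 := lev_le_one hx hy hi (j : ℕ)
  have hb2 := lev_le_one hx hy hi ((j : ℕ) + 1)
  have hPx' : (∃ ℓ, ((x ℓ : ℕ)) = (j : ℕ)) ↔ (∃ ℓ, x ℓ = j) :=
    exists_congr fun ℓ => ⟨fun h => Fin.ext h, fun h => congrArg Fin.val h⟩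
  have hPy' : (∃ m', ((y m' : ℕ)) = (j : ℕ)) ↔ (∃ m', y m' = j) :=
    exists_congr fun m' => ⟨fun h => Fin.ext h, fun h => congrArg Fin.val h⟩
  have hadfc : adf x y j.castSucc = if lev x y (j : ℕ) = 0 then 0 else 1 := by
    unfold adf; rw [Fin.coe_castSucc]
  have hadfs : adf x y j.succ = if lev x y ((j : ℕ) + 1) = 0 then 0 else 1 := by
    unfold adf; rw [Fin.val_succ]
  by_cases hPx : ∃ ℓ, x ℓ = j <;> by_cases hPy : ∃ m', y m' = j
  · -- both x and y site
    rw [if_pos (hPx'.mpr hPx)] at hstepx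
    rw [if_pos (hPy'.mpr hPy)] at hstepy
    have hlev : lev x y ((j : ℕ) + 1) = lev x y (j : ℕ) := by omega
    unfold cfg
    rw [if_pos hPx, if_pos hPy, hadfc, hadfs, hlev]
    rw [if_neg (fun h => h.2 hPx : ¬ ((∃ m', y m' = j) ∧ ¬ (∃ ℓ, x ℓ = j))),
       if_neg (fun h => h.2 hPy : ¬ ((∃ ℓ, x ℓ = j) ∧ ¬ (∃ m', y m' = j)))]
    by_cases hl : lev x y (j : ℕ) = 0
    · rw [if_pos hl, if_pos hl, if_pos hPx]
      simp [LL]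
    · rw [if_neg hl, if_neg hl, if_pos hPx]
      simp [LL]
  · -- x-only site
    rw [if_pos (hPx'.mpr hPx)] at hstepx
    rw [if_neg (fun h => hPy (hPy'.mp h))] at hstepy
    have hl : lev x y (j : ℕ) = 0 := by omega
    have hl2 : lev x y ((j : ℕ) + 1) = 1 := by omega
    unfold cfg
    rw [if_pos hPx, if_neg hPy, hadfc, hadfs, hl, hl2]
    rw [if_neg (by omega : ¬ (1 : ℕ) = 0), if_pos rfl]
    rw [if_neg (fun h => hPy h.1 : ¬ ((∃ m', y m' = j) ∧ ¬ (∃ ℓ, x ℓ = j))),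
       if_pos (⟨hPx, hPy⟩ : ((∃ ℓ, x ℓ = j) ∧ ¬ (∃ m', y m' = j)))]
    simp [LL]
  · -- y-only site
    rw [if_neg (fun h => hPx (hPx'.mp h))] at hstepx
    rw [if_pos (hPy'.mpr hPy)] at hstepy
    have hl : lev x y (j : ℕ) = 1 := by omega
    have hl2 : lev x y ((j : ℕ) + 1) = 0 := by omega
    unfold cfg
    rw [if_neg hPx, if_pos hPy, hadfc, hadfs, hl, hl2]
    rw [if_neg (by omega : ¬ (1 : ℕ) = 0), if_pos rfl]
    rw [if_pos (⟨hPy, hPx⟩ : ((∃ m', y m' = j) ∧ ¬ (∃ ℓ, x ℓ = j)))]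
    simp [LL]
  · -- empty site
    rw [if_neg (fun h => hPx (hPx'.mp h))] at hstepx
    rw [if_neg (fun h => hPy (hPy'.mp h))] at hstepy
    have hlev : lev x y ((j : ℕ) + 1) = lev x y (j : ℕ) := by omega
    unfold cfg
    rw [if_neg hPx, if_neg hPy, hadfc, hadfs, hlev]
    rw [if_neg (fun h => hPy h.1 : ¬ ((∃ m', y m' = j) ∧ ¬ (∃ ℓ, x ℓ = j))),
       if_neg (fun h => hPx h.1 : ¬ ((∃ ℓ, x ℓ = j) ∧ ¬ (∃ m', y m' = j)))]
    by_cases hl : lev x y (j : ℕ) = 0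
    · rw [if_pos hl, if_pos hl, if_neg hPx]
      simp [LL]
    · rw [if_neg hl, if_neg hl, if_neg hPx]
      simp [LL]
end


section
variable {M N : ℕ} {x : Fin N → Fin M} {y : Fin (N + 1) → Fin M}

lemma card_partition_zero (hx : StrictMono x) (hy : StrictMono y) (hi : interlace y x)
    (cond φ : Fin M → Prop) [DecidablePred cond] [DecidablePred φ]
    (hex : ∀ j : Fin M, cond j → ∃ i : Fin (Pset y x).card,
      pseq y x i < (j : ℕ) + 1 ∧ (j : ℕ) + 1 < qseq y x ((i : ℕ) + 1))
    (hcl : ∀ (i : Fin (Pset y x).card) (j : Fin M),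
      pseq y x i < (j : ℕ) + 1 → (j : ℕ) + 1 < qseq y x ((i : ℕ) + 1) → (cond j ↔ φ j)) :
    (univ.filter cond).card = ∑ i : Fin (Pset y x).card,
      (univ.filter fun j : Fin M =>
        φ j ∧ pseq y x i < (j : ℕ) + 1 ∧ (j : ℕ) + 1 < qseq y x ((i : ℕ) + 1)).card := by
  have hset : univ.filter cond = univ.biUnion (fun i : Fin (Pset y x).card =>
      univ.filter fun j : Fin M =>
        φ j ∧ pseq y x i < (j : ℕ) + 1 ∧ (j : ℕ) + 1 < qseq y x ((i : ℕ) + 1)) := by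
    ext j
    simp only [mem_filter, mem_univ, true_and, mem_biUnion]
    constructor
    · intro hc
      obtain ⟨i, h1, h2⟩ := hex j hc
      exact ⟨i, (hcl i j h1 h2).mp hc, h1, h2⟩
    · rintro ⟨i, hφ, h1, h2⟩
      exact (hcl i j h1 h2).mpr hφ
  rw [hset, Finset.card_biUnion]
  intro i _ i' _ hne
  rw [Function.onFun, Finset.disjoint_left]
  intro j hj hj'
  simp only [mem_filter, mem_univ, true_and] at hj hj'
  exact hne (uniq_zero hx hy hi ⟨hj.2.1, hj.2.2⟩ ⟨hj'.2.1, hj'.2.2⟩)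

lemma card_partition_one (hx : StrictMono x) (hy : StrictMono y) (hi : interlace y x)
    (cond φ : Fin M → Prop) [DecidablePred cond] [DecidablePred φ]
    (hex : ∀ j : Fin M, cond j → ∃ i : Fin (Pset y x).card,
      qseq y x (i : ℕ) < (j : ℕ) + 1 ∧ (j : ℕ) + 1 < pseq y x i)
    (hcl : ∀ (i : Fin (Pset y x).card) (j : Fin M),
      qseq y x (i : ℕ) < (j : ℕ) + 1 → (j : ℕ) + 1 < pseq y x i → (cond j ↔ φ j)) :
    (univ.filter cond).card = ∑ i : Fin (Pset y x).card,
      (univ.filter fun j : Fin M =>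
        φ j ∧ qseq y x (i : ℕ) < (j : ℕ) + 1 ∧ (j : ℕ) + 1 < pseq y x i).card := by
  have hset : univ.filter cond = univ.biUnion (fun i : Fin (Pset y x).card =>
      univ.filter fun j : Fin M =>
        φ j ∧ qseq y x (i : ℕ) < (j : ℕ) + 1 ∧ (j : ℕ) + 1 < pseq y x i) := by
    ext j
    simp only [mem_filter, mem_univ, true_and, mem_biUnion]
    constructor
    · intro hc
      obtain ⟨i, h1, h2⟩ := hex j hc
      exact ⟨i, (hcl i j h1 h2).mp hc, h1, h2⟩
    · rintro ⟨i, hφ, h1, h2⟩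
      exact (hcl i j h1 h2).mpr hφ
  rw [hset, Finset.card_biUnion]
  intro i _ i' _ hne
  rw [Function.onFun, Finset.disjoint_left]
  intro j hj hj'
  simp only [mem_filter, mem_univ, true_and] at hj hj'
  exact hne (uniq_one hx hy hi ⟨hj.2.1, hj.2.2⟩ ⟨hj'.2.1, hj'.2.2⟩)

lemma cnt_eq (hx : StrictMono x) (lo hi : ℕ) :
    (univ.filter fun j : Fin M =>
      (∃ ℓ, x ℓ = j) ∧ lo < (j : ℕ) + 1 ∧ (j : ℕ) + 1 < hi).card = cnt x lo hi := by
  unfold cnt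
  symm
  apply Finset.card_bij (fun ℓ _ => x ℓ)
  · intro ℓ hℓ
    simp only [mem_filter, mem_univ, true_and] at hℓ ⊢
    exact ⟨⟨ℓ, rfl⟩, hℓ⟩
  · intro ℓ1 _ ℓ2 _ h
    exact hx.injective h
  · intro j hj
    simp only [mem_filter, mem_univ, true_and] at hj
    obtain ⟨⟨ℓ, hℓ⟩, h1, h2⟩ := hj
    refine ⟨ℓ, ?_, hℓ⟩
    simp only [mem_filter, mem_univ, true_and]
    rw [show ((x ℓ : ℕ)) = (j : ℕ) from congrArg Fin.val hℓ]
    exact ⟨h1, h2⟩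

lemma card_window (lo hi : ℕ) (hhi : hi ≤ M + 1) :
    (univ.filter fun j : Fin M => lo < (j : ℕ) + 1 ∧ (j : ℕ) + 1 < hi).card = hi - lo - 1 := by
  rw [← Nat.card_Ioo]
  apply Finset.card_bij (fun (j : Fin M) _ => (j : ℕ) + 1)
  · intro j hj
    simp only [mem_filter, mem_univ, true_and] at hj
    exact Finset.mem_Ioo.mpr hj
  · intro j1 _ j2 _ h
    exact Fin.ext (by omega)
  · intro s hs
    rw [Finset.mem_Ioo] at hs
    have hsM : s - 1 < M := by omega
    refine ⟨⟨s - 1, hsM⟩, ?_, ?_⟩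
    · simp only [mem_filter, mem_univ, true_and]
      show lo < s - 1 + 1 ∧ s - 1 + 1 < hi
      omega
    · show s - 1 + 1 = s
      omega

lemma card_window_not (hx : StrictMono x) (lo hi : ℕ) (hhi : hi ≤ M + 1) :
    (univ.filter fun j : Fin M =>
      ¬ (∃ ℓ, x ℓ = j) ∧ lo < (j : ℕ) + 1 ∧ (j : ℕ) + 1 < hi).card
      = hi - lo - 1 - cnt x lo hi := by
  classical
  have hsplit := Finset.card_filter_add_card_filter_not
    (s := univ.filter fun j : Fin M => lo < (j : ℕ) + 1 ∧ (j : ℕ) + 1 < hi)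
    (p := fun j => ∃ ℓ, x ℓ = j)
  rw [Finset.filter_filter, Finset.filter_filter] at hsplit
  have he1 : (univ.filter fun j : Fin M =>
      ((lo < (j : ℕ) + 1 ∧ (j : ℕ) + 1 < hi) ∧ ∃ ℓ, x ℓ = j)).card = cnt x lo hi := by
    rw [← cnt_eq hx lo hi]
    congr 1
    apply Finset.filter_congr
    intro j _
    tauto
  have he2 : (univ.filter fun j : Fin M =>
      ((lo < (j : ℕ) + 1 ∧ (j : ℕ) + 1 < hi) ∧ ¬ ∃ ℓ, x ℓ = j)).card
      = (univ.filter fun j : Fin M =>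
      (¬ (∃ ℓ, x ℓ = j) ∧ lo < (j : ℕ) + 1 ∧ (j : ℕ) + 1 < hi)).card := by
    congr 1
    apply Finset.filter_congr
    intro j _
    tauto
  rw [card_window lo hi hhi] at hsplit
  omega

lemma card_c1 (hx : StrictMono x) (hy : StrictMono y) (hi : interlace y x) :
    (univ.filter fun j : Fin M => (∃ m', y m' = j) ∧ ¬ (∃ ℓ, x ℓ = j)).card
      = (Pset y x).card := by
  symm
  apply Finset.card_bij (fun m' _ => y m')
  · intro m' hm'
    simp only [mem_filter, mem_univ, true_and]
    refine ⟨⟨m', rfl⟩, ?_⟩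
    rintro ⟨ℓ, hℓ⟩
    exact (Pset_mem hx hy hi m').mp hm' ℓ hℓ
  · intro m1 _ m2 _ h
    exact hy.injective h
  · intro j hj
    simp only [mem_filter, mem_univ, true_and] at hj
    obtain ⟨⟨m', hm'⟩, hnx⟩ := hj
    refine ⟨m', ?_, hm'⟩
    apply (Pset_mem hx hy hi m').mpr
    intro ℓ hℓ
    exact hnx ⟨ℓ, by rw [hℓ, hm']⟩

lemma card_c2 (hx : StrictMono x) (hy : StrictMono y) (hi : interlace y x) :
    (univ.filter fun j : Fin M => (∃ ℓ, x ℓ = j) ∧ ¬ (∃ m', y m' = j)).card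
      = (Qset y x).card := by
  symm
  apply Finset.card_bij (fun ℓ _ => x ℓ)
  · intro ℓ hℓ
    simp only [mem_filter, mem_univ, true_and]
    refine ⟨⟨ℓ, rfl⟩, ?_⟩
    rintro ⟨m', hm'⟩
    exact (Qset_mem hx hy hi ℓ).mp hℓ m' hm'
  · intro ℓ1 _ ℓ2 _ h
    exact hx.injective h
  · intro j hj
    simp only [mem_filter, mem_univ, true_and] at hj
    obtain ⟨⟨ℓ, hℓ⟩, hny⟩ := hj
    refine ⟨ℓ, ?_, hℓ⟩
    apply (Qset_mem hx hy hi ℓ).mpr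
    intro m' hm'
    exact hny ⟨m', by rw [hm', hℓ]⟩

lemma card_A (hx : StrictMono x) (hy : StrictMono y) (hi : interlace y x) :
    (univ.filter fun j : Fin M =>
      (∃ ℓ, x ℓ = j) ∧ (∃ m', y m' = j) ∧ lev x y (j : ℕ) = 0).card
      = ∑ i : Fin (Pset y x).card, cnt x (pseq y x i) (qseq y x ((i : ℕ) + 1)) := by
  rw [card_partition_zero hx hy hi _ (fun j => ∃ ℓ, x ℓ = j)
    (fun j hc => exists_interval_zero hx hy hi j hc.2.2 (fun ℓ _ => hc.2.1))
    (fun i j h1 h2 => ⟨fun hc => hc.1, fun hφ =>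
      ⟨hφ, (class_zero hx hy hi i j (by omega) (by omega)).mp hφ,
        lev_interval_zero hx hy hi i (j : ℕ) (by omega) (by omega)⟩⟩)]
  exact Finset.sum_congr rfl fun i _ => cnt_eq hx _ _

lemma card_B (hx : StrictMono x) (hy : StrictMono y) (hi : interlace y x) :
    (univ.filter fun j : Fin M =>
      ¬ (∃ ℓ, x ℓ = j) ∧ ¬ (∃ m', y m' = j) ∧ lev x y (j : ℕ) = 0).card
      = ∑ i : Fin (Pset y x).card,
        (qseq y x ((i : ℕ) + 1) - pseq y x i - 1 - cnt x (pseq y x i) (qseq y x ((i : ℕ) + 1))) := by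
  rw [card_partition_zero hx hy hi _ (fun j => ¬ ∃ ℓ, x ℓ = j)
    (fun j hc => exists_interval_zero hx hy hi j hc.2.2 (fun ℓ hℓ => absurd ⟨ℓ, hℓ⟩ hc.1))
    (fun i j h1 h2 => ⟨fun hc => hc.1, fun hφ =>
      ⟨hφ, fun hPy => hφ ((class_zero hx hy hi i j (by omega) (by omega)).mpr hPy),
        lev_interval_zero hx hy hi i (j : ℕ) (by omega) (by omega)⟩⟩)]
  exact Finset.sum_congr rfl fun i _ => card_window_not hx _ _ (qseq_le_M1 _)

lemma card_C (hx : StrictMono x) (hy : StrictMono y) (hi : interlace y x) :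
    (univ.filter fun j : Fin M =>
      (∃ ℓ, x ℓ = j) ∧ (∃ m', y m' = j) ∧ ¬ (lev x y (j : ℕ) = 0)).card
      = ∑ i : Fin (Pset y x).card, cnt x (qseq y x (i : ℕ)) (pseq y x i) := by
  rw [card_partition_one hx hy hi _ (fun j => ∃ ℓ, x ℓ = j)
    (fun j hc => exists_interval_one hx hy hi j
      (by have := lev_le_one hx hy hi (j : ℕ); omega) (fun m' _ => hc.1))
    (fun i j h1 h2 => ⟨fun hc => hc.1, fun hφ =>
      ⟨hφ, (class_one hx hy hi i j (by omega) (by omega)).mp hφ,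
        by rw [lev_interval_one hx hy hi i (j : ℕ) (by omega) (by omega)]; omega⟩⟩)]
  exact Finset.sum_congr rfl fun i _ => cnt_eq hx _ _

lemma card_D (hx : StrictMono x) (hy : StrictMono y) (hi : interlace y x) :
    (univ.filter fun j : Fin M =>
      ¬ (∃ ℓ, x ℓ = j) ∧ ¬ (∃ m', y m' = j) ∧ ¬ (lev x y (j : ℕ) = 0)).card
      = ∑ i : Fin (Pset y x).card,
        (pseq y x i - qseq y x (i : ℕ) - 1 - cnt x (qseq y x (i : ℕ)) (pseq y x i)) := by
  rw [card_partition_one hx hy hi _ (fun j => ¬ ∃ ℓ, x ℓ = j)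
    (fun j hc => exists_interval_one hx hy hi j
      (by have := lev_le_one hx hy hi (j : ℕ); omega) (fun m' hm' => absurd ⟨m', hm'⟩ hc.2.1))
    (fun i j h1 h2 => ⟨fun hc => hc.1, fun hφ =>
      ⟨hφ, fun hPy => hφ ((class_one hx hy hi i j (by omega) (by omega)).mpr hPy),
        by rw [lev_interval_one hx hy hi i (j : ℕ) (by omega) (by omega)]; omega⟩⟩)]
  refine Finset.sum_congr rfl fun i _ => ?_
  have := pseq_le (x := x) (y := y) i
  exact card_window_not hx _ _ (by omega)
end


section
variable {M N : ℕ} {x : Fin N → Fin M} {y : Fin (N + 1) → Fin M}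

lemma prod_ind (q : Fin M → Prop) [DecidablePred q] (v : K) :
    (∏ j : Fin M, if q j then v else 1) = v ^ (univ.filter q).card := by
  rw [← Finset.prod_filter_mul_prod_filter_not univ q (fun j => if q j then v else 1)]
  have h1 : ∏ j ∈ univ.filter q, (if q j then v else 1) = v ^ (univ.filter q).card := by
    rw [Finset.prod_congr rfl (fun j hj => if_pos (mem_filter.mp hj).2), Finset.prod_const]
  have h2 : ∏ j ∈ univ.filter (fun j => ¬ q j), (if q j then v else 1) = 1 := by
    rw [Finset.prod_congr rfl (fun j hj => if_neg (mem_filter.mp hj).2)]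
    exact Finset.prod_const_one
  rw [h1, h2, mul_one]

lemma prod_W (hx : StrictMono x) (hy : StrictMono y) (hi : interlace y x)
    (t a b c d e f u : K) :
    (∏ j : Fin M, (if (∃ m', y m' = j) ∧ ¬ (∃ ℓ, x ℓ = j) then (1 - t) * c * u
      else if (∃ ℓ, x ℓ = j) ∧ ¬ (∃ m', y m' = j) then (1 - t) * d
      else if lev x y (j : ℕ) = 0 then
        (if ∃ ℓ, x ℓ = j then a * t * u + b else a * u + b)
      else (if ∃ ℓ, x ℓ = j then e * u + t * f else e * u + f)))
    = ((1 - t) * c * u) ^ (Pset y x).card * ((1 - t) * d) ^ (Qset y x).card *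
      ((a * t * u + b) ^ (∑ i : Fin (Pset y x).card,
          cnt x (pseq y x i) (qseq y x ((i : ℕ) + 1))) *
       (a * u + b) ^ (∑ i : Fin (Pset y x).card,
          (qseq y x ((i : ℕ) + 1) - pseq y x i - 1 -
            cnt x (pseq y x i) (qseq y x ((i : ℕ) + 1)))) *
       ((e * u + t * f) ^ (∑ i : Fin (Pset y x).card,
          cnt x (qseq y x (i : ℕ)) (pseq y x i)) *
        (e * u + f) ^ (∑ i : Fin (Pset y x).card,
          (pseq y x i - qseq y x (i : ℕ) - 1 -
            cnt x (qseq y x (i : ℕ)) (pseq y x i))))) := by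
  classical
  have hWsplit : ∀ j ∈ (univ : Finset (Fin M)),
      (if (∃ m', y m' = j) ∧ ¬ (∃ ℓ, x ℓ = j) then (1 - t) * c * u
      else if (∃ ℓ, x ℓ = j) ∧ ¬ (∃ m', y m' = j) then (1 - t) * d
      else if lev x y (j : ℕ) = 0 then
        (if ∃ ℓ, x ℓ = j then a * t * u + b else a * u + b)
      else (if ∃ ℓ, x ℓ = j then e * u + t * f else e * u + f))
      = (if (∃ m', y m' = j) ∧ ¬ (∃ ℓ, x ℓ = j) then (1 - t) * c * u else 1) *
        ((if (∃ ℓ, x ℓ = j) ∧ ¬ (∃ m', y m' = j) then (1 - t) * d else 1) *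
        ((if (∃ ℓ, x ℓ = j) ∧ (∃ m', y m' = j) ∧ lev x y (j : ℕ) = 0 then a * t * u + b else 1) *
        ((if ¬ (∃ ℓ, x ℓ = j) ∧ ¬ (∃ m', y m' = j) ∧ lev x y (j : ℕ) = 0 then a * u + b else 1) *
        ((if (∃ ℓ, x ℓ = j) ∧ (∃ m', y m' = j) ∧ ¬ (lev x y (j : ℕ) = 0) then e * u + t * f else 1) *
         (if ¬ (∃ ℓ, x ℓ = j) ∧ ¬ (∃ m', y m' = j) ∧ ¬ (lev x y (j : ℕ) = 0) then e * u + f else 1))))) := by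
    intro j _
    by_cases h1 : ∃ ℓ, x ℓ = j <;> by_cases h2 : ∃ m', y m' = j <;>
      by_cases h3 : lev x y (j : ℕ) = 0 <;> simp [h1, h2, h3]
  rw [Finset.prod_congr rfl hWsplit]
  rw [Finset.prod_mul_distrib, Finset.prod_mul_distrib, Finset.prod_mul_distrib,
    Finset.prod_mul_distrib, Finset.prod_mul_distrib]
  rw [prod_ind, prod_ind, prod_ind, prod_ind, prod_ind, prod_ind]
  rw [card_c1 hx hy hi, card_c2 hx hy hi, card_A hx hy hi, card_B hx hy hi,
    card_C hx hy hi, card_D hx hy hi]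
  ring
end

theorem B_matrix_element {M N : ℕ} (t a b c d e f : K)
    (ht : t ≠ 1) (ha : a ≠ 0) (hb : b ≠ 0) (hc : c ≠ 0) (hd : d ≠ 0)
    (he : e ≠ 0) (hf : f ≠ 0)
    (hcon1 : c * d + a * f = 0) (hcon2 : t * (c * d) + b * e = 0)
    (u : K)
    (x : Fin N → Fin M) (hx : StrictMono x)
    (y : Fin (N + 1) → Fin M) (hy : StrictMono y) :
    Bop M t a b c d e f u (cfg y) (cfg x) = Gskew t a b c d e f u y x := by
  classical
  by_cases hI : interlace y x
  · rw [Bop_eq_prod_of_interlace hx hy hI t a b c d e f u,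
      Finset.prod_congr rfl (fun j _ => site_weight hx hy hI t a b c d e f u j),
      prod_W hx hy hI t a b c d e f u]
    unfold Gskew
    rw [if_pos hI]
    rw [Finset.prod_mul_distrib, Finset.prod_mul_distrib, Finset.prod_mul_distrib,
      Finset.prod_pow_eq_pow_sum, Finset.prod_pow_eq_pow_sum,
      Finset.prod_pow_eq_pow_sum, Finset.prod_pow_eq_pow_sum]
    ring
  · rw [Bop_eq_zero_of_not_interlace hx hy hI t a b c d e f u]
    unfold Gskew
    rw [if_neg hI]
end
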